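/- The function V(x) = (M/γ)(1 - exp(r̃_-(β)x)) satisfies (1/2)σ²β²V''(x) + (βμ - δ - M)V'(x) - γV(x) + M = 0 for all x ≥ 0, with V(0) = 0, and V is strictly increasing, strictly concave, and bounded above by M/γ. -/

import Mathlib

open Real

/-- `V(x) = (M/γ)(1 - exp(r̃₋(β) x))` solves
`(1/2)σ²β² V'' + (βμ - δ - M) V' - γ V + M = 0` on `[0, ∞)` with `V 0 = 0`,
and `V` is strictly increasing, strictly concave, and bounded above by `M/γ`. -/
theorem stmt_4 (μ σ γ M β δ : ℝ) (hμ : 0 < μ) (hσ : 0 < σ) (hγ : 0 < γ)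
    (hM : 0 < M) (hβ : 0 < β) (hδ : 0 ≤ δ)
    (r : ℝ)
    (hr : r = (-(β * μ - δ - M) - Real.sqrt ((β * μ - δ - M) ^ 2 + 2 * γ * σ ^ 2 * β ^ 2)) / (β ^ 2 * σ ^ 2))
    (V : ℝ → ℝ) (hV : ∀ x, V x = (M / γ) * (1 - Real.exp (r * x))) :
    (∀ x ≥ (0 : ℝ),
        (1 / 2) * σ ^ 2 * β ^ 2 * deriv (deriv V) x
          + (β * μ - δ - M) * deriv V x - γ * V x + M = 0) ∧
    V 0 = 0 ∧
    StrictMonoOn V (Set.Ici (0 : ℝ)) ∧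
    StrictConcaveOn ℝ (Set.Ici (0 : ℝ)) V ∧
    (∀ x ≥ (0 : ℝ), V x ≤ M / γ) := by
  have hVf : V = fun x => (M / γ) * (1 - Real.exp (r * x)) := funext hV
  subst hVf
  set a : ℝ := β * μ - δ - M with ha
  set s : ℝ := Real.sqrt (a ^ 2 + 2 * γ * σ ^ 2 * β ^ 2) with hsdef
  have ht : (0:ℝ) < β ^ 2 * σ ^ 2 := by positivity
  have hP : (0:ℝ) < 2 * γ * σ ^ 2 * β ^ 2 := by positivity
  have hs0 : 0 ≤ s := Real.sqrt_nonneg _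
  have hs2 : s ^ 2 = a ^ 2 + 2 * γ * σ ^ 2 * β ^ 2 := by
    rw [hsdef]; exact Real.sq_sqrt (by positivity)
  have h1 : β ^ 2 * σ ^ 2 * r = -a - s := by
    rw [hr]; field_simp
  have hrneg : r < 0 := by
    have has : 0 < a + s := by nlinarith [sq_nonneg (s + a), sq_nonneg (s - a)]
    have : β ^ 2 * σ ^ 2 * r < 0 := by rw [h1]; linarith
    nlinarith
  have hq0 : σ ^ 2 * β ^ 2 * ((1/2) * σ ^ 2 * β ^ 2 * r ^ 2 + a * r - γ) = 0 := by
    linear_combination ((β ^ 2 * σ ^ 2 * r + a - s)/2) * h1 + (1/2) * hs2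
  have hq : (1/2) * σ ^ 2 * β ^ 2 * r ^ 2 + a * r - γ = 0 := by
    rcases mul_eq_zero.mp hq0 with h | h
    · exact absurd h (by positivity)
    · exact h
  -- derivatives
  have hD : ∀ x : ℝ, HasDerivAt (fun x => (M / γ) * (1 - Real.exp (r * x)))
      (-(M / γ) * r * Real.exp (r * x)) x := by
    intro x
    have h1' : HasDerivAt (fun x : ℝ => r * x) r x := by
      simpa using (hasDerivAt_id x).const_mul r
    have h2 : HasDerivAt (fun x : ℝ => Real.exp (r * x)) (Real.exp (r * x) * r) x := h1'.exp
    have h3 := ((hasDerivAt_const x (1:ℝ)).sub h2).const_mul (M / γ)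
    exact h3.congr_deriv (by ring)
  have hderiv : deriv (fun x => (M / γ) * (1 - Real.exp (r * x)))
      = fun x => -(M / γ) * r * Real.exp (r * x) := funext fun x => (hD x).deriv
  have hD2 : ∀ x : ℝ, HasDerivAt (fun x => -(M / γ) * r * Real.exp (r * x))
      (-(M / γ) * r * r * Real.exp (r * x)) x := by
    intro x
    have h1' : HasDerivAt (fun x : ℝ => r * x) r x := by
      simpa using (hasDerivAt_id x).const_mul r
    have h2 : HasDerivAt (fun x : ℝ => Real.exp (r * x)) (Real.exp (r * x) * r) x := h1'.exp
    have h3 := h2.const_mul (-(M / γ) * r)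
    exact h3.congr_deriv (by ring)
  have hderiv2 : deriv (deriv (fun x => (M / γ) * (1 - Real.exp (r * x))))
      = fun x => -(M / γ) * r * r * Real.exp (r * x) := by
    rw [hderiv]; exact funext fun x => (hD2 x).deriv
  have hMγ : 0 < M / γ := by positivity
  have hcont : Continuous (fun x => (M / γ) * (1 - Real.exp (r * x))) := by fun_prop
  refine ⟨?_, ?_, ?_, ?_, ?_⟩
  · intro x hx
    rw [hderiv2, hderiv]
    simp only
    have hMγeq : γ * (M / γ) = M := by field_simp
    linear_combination (-(M / γ) * Real.exp (r * x)) * hq - hMγeq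
  · simp
  · apply strictMonoOn_of_deriv_pos (convex_Ici 0) hcont.continuousOn
    intro x hx
    rw [hderiv]
    show 0 < -(M / γ) * r * Real.exp (r * x)
    have h2 : 0 < (M / γ) * (-r) * Real.exp (r * x) :=
      mul_pos (mul_pos hMγ (neg_pos.mpr hrneg)) (Real.exp_pos _)
    linarith [h2, (by ring : -(M / γ) * r * Real.exp (r * x) = (M / γ) * (-r) * Real.exp (r * x))]
  · apply strictConcaveOn_of_deriv2_neg (convex_Ici 0) hcont.continuousOn
    intro x hx
    have : deriv^[2] (fun x => (M / γ) * (1 - Real.exp (r * x)))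
        = deriv (deriv (fun x => (M / γ) * (1 - Real.exp (r * x)))) := rfl
    rw [this, hderiv2]
    show -(M / γ) * r * r * Real.exp (r * x) < 0
    have h2 : 0 < (M / γ) * (r * r) * Real.exp (r * x) :=
      mul_pos (mul_pos hMγ (mul_pos_of_neg_of_neg hrneg hrneg)) (Real.exp_pos _)
    linarith [h2, (by ring : -(M / γ) * r * r * Real.exp (r * x) = -((M / γ) * (r * r) * Real.exp (r * x)))]
  · intro x hx
    have h := Real.exp_pos (r * x)
    show (M / γ) * (1 - Real.exp (r * x)) ≤ M / γ
    nlinarith
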